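/- (Cartan–Dieudonné, weak form) Let V be a real vector space of finite dimension n ≥ 1 and let B be a symmetric non-degenerate bilinear form on V. For v ∈ V with B(v,v) ≠ 0 define the reflection ρ_v : V → V by ρ_v(x) := x − (2 B(v,x)/B(v,v))•v. Then every linear bijection φ : V → V satisfying B(φ(u), φ(w)) = B(u, w) for all u, w (a generalized orthogonal transformation) is a composition of at most 2n − 1 such reflections: there exists a list v₁, …, v_k of vectors with B(vᵢ,vᵢ) ≠ 0 and k ≤ 2n − 1 such that φ = ρ_{v₁} ∘ ⋯ ∘ ρ_{v_k}. -/

import Mathlib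

open Module
open LinearMap (BilinForm)

universe u

namespace CD

variable {V : Type*} [AddCommGroup V] [Module ℝ V]

/-- The reflection `ρ_v` as a linear map. -/
noncomputable def reflLM (B : BilinForm ℝ V) (v : V) : V →ₗ[ℝ] V :=
  LinearMap.id - (2 / B v v) • (B v).smulRight v

lemma reflLM_apply (B : BilinForm ℝ V) (v x : V) :
    reflLM B v x = x - (2 * B v x / B v v) • v := by
  simp only [reflLM, LinearMap.sub_apply, LinearMap.id_apply, LinearMap.smul_apply,
    LinearMap.smulRight_apply, smul_smul]
  ring_nf

lemma reflLM_apply_of_orth (B : BilinForm ℝ V) {v x : V} (h : B v x = 0) :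
    reflLM B v x = x := by
  simp [reflLM_apply, h]

lemma reflLM_self (B : BilinForm ℝ V) {v : V} (hv : B v v ≠ 0) :
    reflLM B v v = -v := by
  rw [reflLM_apply, mul_div_assoc, div_self hv]
  module

lemma reflLM_involutive (B : BilinForm ℝ V) {v : V} (hv : B v v ≠ 0) (x : V) :
    reflLM B v (reflLM B v x) = x := by
  simp only [reflLM_apply, map_sub, map_smul, smul_eq_mul, smul_smul]
  field_simp
  module

lemma reflLM_isometry (B : BilinForm ℝ V) (hsymm : ∀ u v : V, B u v = B v u)
    {v : V} (hv : B v v ≠ 0) (x y : V) :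
    B (reflLM B v x) (reflLM B v y) = B x y := by
  simp only [reflLM_apply, map_sub, map_smul, LinearMap.sub_apply, LinearMap.smul_apply,
    smul_eq_mul]
  rw [hsymm x v]
  field_simp
  ring

/-- The reflection as a linear equivalence. -/
noncomputable def reflEquiv (B : BilinForm ℝ V) {v : V} (hv : B v v ≠ 0) : V ≃ₗ[ℝ] V :=
  LinearEquiv.ofInvolutive (reflLM B v) (reflLM_involutive B hv)

@[simp] lemma reflEquiv_apply (B : BilinForm ℝ V) {v : V} (hv : B v v ≠ 0) (x : V) :
    reflEquiv B hv x = reflLM B v x := rfl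

/-- Product of the reflections attached to a list of vectors. -/
noncomputable def prodRefl (B : BilinForm ℝ V) (l : List V) : V →ₗ[ℝ] V :=
  (l.map (reflLM B)).foldr (· ∘ₗ ·) LinearMap.id

@[simp] lemma prodRefl_nil (B : BilinForm ℝ V) : prodRefl B [] = LinearMap.id := rfl

@[simp] lemma prodRefl_cons (B : BilinForm ℝ V) (v : V) (l : List V) :
    prodRefl B (v :: l) = reflLM B v ∘ₗ prodRefl B l := rfl

lemma prodRefl_eq_foldr (B : BilinForm ℝ V) (l : List V) :
    ⇑(prodRefl B l) = l.foldr
      (fun v f => (fun x => x - (2 * B v x / B v v) • v) ∘ f) id := by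
  induction l with
  | nil => rfl
  | cons v l ih =>
    rw [prodRefl_cons, List.foldr_cons, ← ih]
    ext x
    simp [reflLM_apply]

lemma prodRefl_fix (B : BilinForm ℝ V) {l : List V} {x : V}
    (h : ∀ u ∈ l, B u x = 0) : prodRefl B l x = x := by
  induction l with
  | nil => rfl
  | cons v l ih =>
    simp only [prodRefl_cons, LinearMap.comp_apply]
    rw [ih fun u hu => h u (List.mem_cons_of_mem _ hu),
      reflLM_apply_of_orth B (h v List.mem_cons_self)]

lemma reflLM_coe (B : BilinForm ℝ V) (W : Submodule ℝ V) (u w : W) :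
    reflLM B (u : V) (w : V) = ((reflLM (B.restrict W) u w : W) : V) := by
  rw [reflLM_apply, reflLM_apply]
  push_cast
  simp [LinearMap.BilinForm.restrict_apply]

lemma prodRefl_coe (B : BilinForm ℝ V) (W : Submodule ℝ V) (l : List W) (w : W) :
    prodRefl B (l.map Subtype.val) (w : V) = ((prodRefl (B.restrict W) l w : W) : V) := by
  induction l with
  | nil => rfl
  | cons u l ih =>
    simp only [List.map_cons, prodRefl_cons, LinearMap.comp_apply, ih]
    exact reflLM_coe B W u _

lemma exists_anisotropic [FiniteDimensional ℝ V] (hrank : finrank ℝ V ≠ 0)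
    (B : BilinForm ℝ V) (hsymm : ∀ u v : V, B u v = B v u)
    (hnd : ∀ v : V, (∀ w : V, B v w = 0) → v = 0) : ∃ v : V, B v v ≠ 0 := by
  by_contra h
  push_neg at h
  have : Nontrivial V := by
    rw [← Module.finrank_pos_iff (R := ℝ)]
    omega
  obtain ⟨x, hx⟩ := exists_ne (0 : V)
  refine hx (hnd x fun w => ?_)
  have h1 := h (x + w)
  have h2 := h x
  have h3 := h w
  have h4 := hsymm x w
  simp only [map_add, LinearMap.add_apply] at h1
  linarith

/-- The key reduction step: an isometry fixing an anisotropic vector `v` is a product of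
reflections obtained (essentially) from the orthogonal hyperplane of `v`. -/
lemma fix_step {V : Type u} [AddCommGroup V] [Module ℝ V] [FiniteDimensional ℝ V]
    {n : ℕ} (hdim : finrank ℝ V = n + 1)
    (B : BilinForm ℝ V) (hsymm : ∀ u w : V, B u w = B w u)
    (hnd : ∀ x : V, (∀ w : V, B x w = 0) → x = 0)
    {v : V} (hv : B v v ≠ 0)
    (ψ : V ≃ₗ[ℝ] V) (hiso : ∀ u w : V, B (ψ u) (ψ w) = B u w) (hfix : ψ v = v)
    (IH : ∀ (W : Type u) [AddCommGroup W] [Module ℝ W] [FiniteDimensional ℝ W],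
      finrank ℝ W = n → ∀ (B' : BilinForm ℝ W), (∀ u w : W, B' u w = B' w u) →
      (∀ x : W, (∀ w : W, B' x w = 0) → x = 0) →
      ∀ (χ : W ≃ₗ[ℝ] W), (∀ u w : W, B' (χ u) (χ w) = B' u w) →
      ∃ l : List W, (∀ u ∈ l, B' u u ≠ 0) ∧ l.length ≤ 2 * n - 1 ∧
        χ.toLinearMap = prodRefl B' l) :
    ∃ l : List V, (∀ u ∈ l, B u u ≠ 0) ∧ l.length ≤ 2 * n - 1 ∧
      ψ.toLinearMap = prodRefl B l := by
  classical
  set W : Submodule ℝ V := LinearMap.ker (B v) with hWdef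
  have hvW : ∀ w : V, w ∈ W ↔ B v w = 0 := fun w => LinearMap.mem_ker
  have hBv : (B v : V →ₗ[ℝ] ℝ) ≠ 0 := by
    intro h
    exact hv (by rw [h]; rfl)
  have hWdim : finrank ℝ W = n := by
    have h := Module.Dual.finrank_ker_add_one_of_ne_zero (f := B v) hBv
    rw [hdim] at h
    rw [hWdef]
    omega
  -- decomposition of arbitrary vectors
  have hdecomp : ∀ x : V, ∃ (c : ℝ) (w : V), w ∈ W ∧ x = c • v + w := by
    intro x
    refine ⟨B v x / B v v, x - (B v x / B v v) • v, ?_, by abel⟩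
    rw [hvW]
    simp only [map_sub, map_smul, smul_eq_mul]
    field_simp
    ring
  -- restricted form
  set B' : BilinForm ℝ W := B.restrict W with hB'def
  have hB'apply : ∀ u w : W, B' u w = B (u : V) (w : V) := fun u w => rfl
  have hsymm' : ∀ u w : W, B' u w = B' w u := fun u w => hsymm _ _
  have hnd' : ∀ x : W, (∀ w : W, B' x w = 0) → x = 0 := by
    intro x hx
    have hxv : B (x : V) v = 0 := by
      rw [hsymm]
      exact (hvW (x : V)).1 x.2
    have : (x : V) = 0 := by
      apply hnd
      intro y
      obtain ⟨c, w, hw, rfl⟩ := hdecomp y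
      rw [map_add, map_smul, hxv, smul_eq_mul, mul_zero, zero_add]
      exact hx ⟨w, hw⟩
    exact Subtype.ext this
  -- restricted isometry
  have hmap : ∀ w ∈ W, ψ w ∈ W := by
    intro w hw
    rw [hvW] at hw ⊢
    rw [← hfix, hiso]
    exact hw
  have hmap' : ∀ w ∈ W, ψ.symm w ∈ W := by
    intro w hw
    rw [hvW] at hw ⊢
    have := hiso v (ψ.symm w)
    rw [hfix, ψ.apply_symm_apply] at this
    rw [← this]
    exact hw
  set f : W →ₗ[ℝ] W := ψ.toLinearMap.restrict hmap with hfdef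
  set g : W →ₗ[ℝ] W := ψ.symm.toLinearMap.restrict hmap' with hgdef
  have hfg : f ∘ₗ g = LinearMap.id := by
    ext w
    simp [hfdef, hgdef, LinearMap.restrict_apply]
  have hgf : g ∘ₗ f = LinearMap.id := by
    ext w
    simp [hfdef, hgdef, LinearMap.restrict_apply]
  set ψ' : W ≃ₗ[ℝ] W := LinearEquiv.ofLinear f g hfg hgf with hψ'def
  have hψ'apply : ∀ w : W, ((ψ' w : W) : V) = ψ (w : V) := fun w => rfl
  have hiso' : ∀ u w : W, B' (ψ' u) (ψ' w) = B' u w := by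
    intro u w
    rw [hB'apply, hB'apply, hψ'apply, hψ'apply]
    exact hiso _ _
  obtain ⟨l', hl'1, hl'2, hl'3⟩ := IH W hWdim B' hsymm' hnd' ψ' hiso'
  refine ⟨l'.map Subtype.val, ?_, by simpa using hl'2, ?_⟩
  · intro u hu
    obtain ⟨u', hu', rfl⟩ := List.mem_map.1 hu
    exact hl'1 u' hu'
  · ext x
    obtain ⟨c, w, hw, rfl⟩ := hdecomp x
    have h1 : prodRefl B (l'.map Subtype.val) v = v := by
      apply prodRefl_fix
      intro u hu
      obtain ⟨u', hu', rfl⟩ := List.mem_map.1 hu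
      rw [hsymm]
      exact (hvW (u' : V)).1 u'.2
    have h2 : prodRefl B (l'.map Subtype.val) w = ψ w := by
      have := prodRefl_coe B W l' ⟨w, hw⟩
      rw [← hl'3] at this
      simpa [hψ'apply] using this
    simp only [LinearEquiv.coe_coe, map_add, map_smul, LinearMap.coe_comp]
    rw [hfix, h1, h2]


theorem aux : ∀ (n : ℕ) (V : Type u) [AddCommGroup V] [Module ℝ V] [FiniteDimensional ℝ V],
    finrank ℝ V = n → ∀ (B : BilinForm ℝ V), (∀ u w : V, B u w = B w u) →
    (∀ x : V, (∀ w : V, B x w = 0) → x = 0) →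
    ∀ (φ : V ≃ₗ[ℝ] V), (∀ u w : V, B (φ u) (φ w) = B u w) →
    ∃ l : List V, (∀ u ∈ l, B u u ≠ 0) ∧ l.length ≤ 2 * n - 1 ∧
      φ.toLinearMap = prodRefl B l := by
  intro n
  induction n using Nat.strong_induction_on with
  | _ n IHn =>
  intro V _ _ _ hdim B hsymm hnd φ hiso
  match n, hdim with
  | 0, hdim =>
    have : Subsingleton V := by
      rw [← Module.finrank_zero_iff (R := ℝ)]
      exact hdim
    exact ⟨[], by simp, by simp, LinearMap.ext fun x => Subsingleton.elim _ _⟩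
  | (k + 1), hdim =>
    -- the induction hypothesis in the form needed by `fix_step`
    have IH := fun (W : Type u) [AddCommGroup W] [Module ℝ W] [FiniteDimensional ℝ W]
      (h : finrank ℝ W = k) => IHn k (by omega) W h
    obtain ⟨v, hv⟩ := exists_anisotropic (by omega) B hsymm hnd
    have hφvv : B (φ v) (φ v) = B v v := hiso v v
    by_cases hfix : φ v = v
    · -- Case A : `φ` fixes `v`
      obtain ⟨l, hl1, hl2, hl3⟩ := fix_step hdim B hsymm hnd hv φ hiso hfix IH
      exact ⟨l, hl1, by omega, hl3⟩
    · have key : B (φ v - v) (φ v - v) + B (φ v + v) (φ v + v) = 4 * B v v := by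
        simp only [map_sub, map_add, LinearMap.sub_apply, LinearMap.add_apply]
        rw [hφvv, hsymm (φ v) v]
        ring
      by_cases hu : B (φ v - v) (φ v - v) ≠ 0
      · -- Case B : reflect `φ v` back to `v` with one reflection
        set u := φ v - v with hudef
        have h2 : 2 * B u (φ v) = B u u := by
          simp only [hudef, map_sub, LinearMap.sub_apply]
          rw [hφvv, hsymm (φ v) v]
          ring
        have hrefl : reflLM B u (φ v) = v := by
          rw [reflLM_apply, h2, div_self hu, one_smul, hudef]
          abel
        set ψ : V ≃ₗ[ℝ] V := φ.trans (reflEquiv B hu) with hψdef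
        have hψiso : ∀ a b : V, B (ψ a) (ψ b) = B a b := by
          intro a b
          simp only [hψdef, LinearEquiv.trans_apply, reflEquiv_apply]
          rw [reflLM_isometry B hsymm hu, hiso]
        have hψfix : ψ v = v := by
          simp only [hψdef, LinearEquiv.trans_apply, reflEquiv_apply]
          exact hrefl
        obtain ⟨l, hl1, hl2, hl3⟩ := fix_step hdim B hsymm hnd hv ψ hψiso hψfix IH
        refine ⟨u :: l, ?_, by simp; omega, ?_⟩
        · intro x hx
          rcases List.mem_cons.1 hx with h | hx
          · rw [h]; exact hu
          · exact hl1 x hx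
        · ext x
          have : ψ x = prodRefl B l x := by rw [← hl3]; rfl
          simp only [prodRefl_cons, LinearMap.comp_apply, ← this, hψdef,
            LinearEquiv.coe_coe, LinearEquiv.trans_apply, reflEquiv_apply]
          exact (reflLM_involutive B hu (φ x)).symm
      · -- Case C : two reflections needed
        push_neg at hu
        have hw : B (φ v + v) (φ v + v) ≠ 0 := by
          intro h
          rw [hu, h] at key
          simp only [zero_add] at key
          exact hv (by linarith)
        -- rule out dimension 1
        rcases Nat.eq_zero_or_pos k with rfl | hk
        · exfalso
          have hvne : v ≠ 0 := fun h => hv (by simp [h])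
          have hspan : Submodule.span ℝ {v} = ⊤ := by
            apply Submodule.eq_top_of_finrank_eq
            rw [finrank_span_singleton hvne, hdim]
          have : φ v ∈ Submodule.span ℝ ({v} : Set V) := hspan ▸ Submodule.mem_top
          obtain ⟨c, hc⟩ := Submodule.mem_span_singleton.1 this
          rw [← hc] at hu hφvv hfix
          have hBvv : (c * c - 1) * B v v = 0 := by
            simp only [map_smul, LinearMap.smul_apply, smul_eq_mul] at hφvv
            linarith
          have hc1 : c * c = 1 := by
            rcases mul_eq_zero.1 hBvv with h | h
            · linarith
            · exact absurd h hv
          have : (c - 1) * (c - 1) * B v v = 0 := by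
            simp only [map_sub, map_smul, LinearMap.sub_apply, LinearMap.smul_apply,
              smul_eq_mul] at hu
            nlinarith [hu]
          rcases mul_eq_zero.1 this with h | h
          · have : c = 1 := by nlinarith [h]
            exact hfix (by rw [this, one_smul])
          · exact hv h
        · set w := φ v + v with hwdef
          have h2 : 2 * B w (φ v) = B w w := by
            simp only [hwdef, map_add, LinearMap.add_apply]
            rw [hφvv, hsymm (φ v) v]
            ring
          have hrefl1 : reflLM B w (φ v) = -v := by
            rw [reflLM_apply, h2, div_self hw, one_smul, hwdef]
            abel
          have hrefl2 : reflLM B v (-v) = v := by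
            rw [map_neg, reflLM_self B hv, neg_neg]
          set ψ : V ≃ₗ[ℝ] V := (φ.trans (reflEquiv B hw)).trans (reflEquiv B hv) with hψdef
          have hψiso : ∀ a b : V, B (ψ a) (ψ b) = B a b := by
            intro a b
            simp only [hψdef, LinearEquiv.trans_apply, reflEquiv_apply]
            rw [reflLM_isometry B hsymm hv, reflLM_isometry B hsymm hw, hiso]
          have hψfix : ψ v = v := by
            simp only [hψdef, LinearEquiv.trans_apply, reflEquiv_apply]
            rw [hrefl1, hrefl2]
          obtain ⟨l, hl1, hl2, hl3⟩ := fix_step hdim B hsymm hnd hv ψ hψiso hψfix IH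
          refine ⟨w :: v :: l, ?_, by simp; omega, ?_⟩
          · intro x hx
            rcases List.mem_cons.1 hx with h | hx
            · rw [h]; exact hw
            rcases List.mem_cons.1 hx with h | hx
            · rw [h]; exact hv
            · exact hl1 x hx
          · ext x
            have : ψ x = prodRefl B l x := by rw [← hl3]; rfl
            simp only [prodRefl_cons, LinearMap.comp_apply, ← this, hψdef,
              LinearEquiv.coe_coe, LinearEquiv.trans_apply, reflEquiv_apply]
            rw [reflLM_involutive B hv, reflLM_involutive B hw]

end CD

/-- **Cartan–Dieudonné theorem** (weak form): every linear bijection of an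
`n`-dimensional real vector space (`n ≥ 1`) preserving a non-degenerate
symmetric bilinear form `B` is the composition of at most `2n − 1` reflections
`ρ_v : x ↦ x − (2 B(v,x)/B(v,v)) • v` at non-degenerate hyperplanes. -/
theorem cartan_dieudonne_weak
    {V : Type*} [AddCommGroup V] [Module ℝ V] [FiniteDimensional ℝ V]
    (n : ℕ) (hn : 1 ≤ n) (hdim : Module.finrank ℝ V = n)
    (B : LinearMap.BilinForm ℝ V)
    (hsymm : ∀ u v : V, B u v = B v u)
    (hnd : ∀ v : V, (∀ w : V, B v w = 0) → v = 0)
    (φ : V ≃ₗ[ℝ] V) (hiso : ∀ u w : V, B (φ u) (φ w) = B u w) :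
    ∃ l : List V, (∀ v ∈ l, B v v ≠ 0) ∧ l.length ≤ 2 * n - 1 ∧
      ⇑φ = l.foldr
        (fun v f => (fun x => x - (2 * B v x / B v v) • v) ∘ f) id := by
  obtain ⟨l, hl1, hl2, hl3⟩ := CD.aux n V hdim B hsymm hnd φ hiso
  refine ⟨l, hl1, hl2, ?_⟩
  rw [← CD.prodRefl_eq_foldr, ← hl3]
  rfl
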